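/- Suppose K = F₂ and S is a basis of X. Then, for any α ∈ X*, the affine transvection group Tr^α(S) preserves the function Q_S + α, i.e., (Q_S + α)(g(x)) = (Q_S + α)(x) for every g ∈ Tr^α(S) and every x ∈ X. -/

import Mathlib

/-- Affine transvections `T^{α(s)}_{s,k} : x ↦ x + k(ω(x,s) + α(s))·s`. -/
def affTransvectionSet {K X : Type*} [Field K] [AddCommGroup X] [Module K X]
    (ω : X →ₗ[K] X →ₗ[K] K) (S : Set X) (α : X → K) : Set (Equiv.Perm X) :=
  {f | ∃ s ∈ S, ∃ k : K, k ≠ 0 ∧ ∀ x, f x = x + (k * (ω x s + α s)) • s}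

/-- The affine transvection group `Tr^α(S)`. -/
def affTransvectionGroup {K X : Type*} [Field K] [AddCommGroup X] [Module K X]
    (ω : X →ₗ[K] X →ₗ[K] K) (S : Set X) (α : X → K) : Subgroup (Equiv.Perm X) :=
  Subgroup.closure (affTransvectionSet ω S α)

/-- for `K = 𝔽₂` and a basis `S` of `X`, the affine transvection
group `Tr^α(S)` preserves the function `Q_S + α`. -/
theorem stmt10 {X : Type*} [AddCommGroup X] [Module (ZMod 2) X]
    [FiniteDimensional (ZMod 2) X]
    (ω : X →ₗ[ZMod 2] X →ₗ[ZMod 2] ZMod 2) (halt : ∀ x, ω x x = 0)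
    (S : Set X) (hind : LinearIndependent (ZMod 2) ((↑) : S → X))
    (hspan : Submodule.span (ZMod 2) S = ⊤)
    (Q : X → ZMod 2) (hQS : ∀ s ∈ S, Q s = 1)
    (hQpol : ∀ x y, Q (x + y) + Q x + Q y = ω x y)
    (α : Module.Dual (ZMod 2) X) :
    ∀ g ∈ affTransvectionGroup ω S ⇑α, ∀ x, Q (g x) + α (g x) = Q x + α x := by
  intro g hg
  induction hg using Subgroup.closure_induction with
  | mem f hf =>
    obtain ⟨s, hs, k, hk, hfx⟩ := hf
    have hk1 : k = 1 := (by decide : ∀ a : ZMod 2, a ≠ 0 → a = 1) k hk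
    intro x
    rw [hfx x, hk1, one_mul]
    rcases (by decide : ∀ a : ZMod 2, a = 0 ∨ a = 1) (ω x s + α s) with hc | hc
    · rw [hc, zero_smul, add_zero]
    · rw [hc, one_smul, map_add]
      have h2z : (2 : ZMod 2) = 0 := rfl
      linear_combination hQpol x s + hQS s hs + hc + (1 - Q x - Q s) * h2z
  | one => intro x; rfl
  | mul f h _ _ hf hh =>
    intro x
    calc Q ((f * h) x) + α ((f * h) x) = Q (f (h x)) + α (f (h x)) := rfl
      _ = Q (h x) + α (h x) := hf (h x)
      _ = Q x + α x := hh x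
  | inv f _ hf =>
    intro x
    have := hf (f⁻¹ x)
    simp only [Equiv.Perm.inv_def, Equiv.apply_symm_apply] at this
    exact this.symm
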